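/- Suppose κ and λ are regular cardinals with λ < κ. Every tree of height κ all of whose levels have size less than λ has a chain of size κ (a cofinal branch). -/

import Mathlib

universe u

open Cardinal

def Colorable' {V : Type u} (G : SimpleGraph V) (μ : Cardinal.{u}) : Prop :=
  ∃ (β : Type u) (c : V → β), #β ≤ μ ∧ ∀ ⦃x y : V⦄, G.Adj x y → c x ≠ c y

def ChromaticEq {V : Type u} (G : SimpleGraph V) (μ : Cardinal.{u}) : Prop :=
  Colorable' G μ ∧ ∀ ν : Cardinal.{u}, ν < μ → ¬ Colorable' G ν

def HasCompleteMinor {V : Type u} (G : SimpleGraph V) (κ : Cardinal.{u}) : Prop :=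
  ∃ (ι : Type u) (U : ι → Set V), #ι = κ ∧
    (∀ i, (U i).Nonempty) ∧
    (∀ i j, i ≠ j → Disjoint (U i) (U j)) ∧
    (∀ i, (G.induce (U i)).Connected) ∧
    (∀ i j, i ≠ j → ∃ x ∈ U i, ∃ y ∈ U j, G.Adj x y)

def IsSetTree (T : Type u) [PartialOrder T] : Prop :=
  ∀ t : T, IsWellOrder {s : T // s < t} (· < ·)

def compGraph (T : Type u) [PartialOrder T] : SimpleGraph T :=
  SimpleGraph.fromRel (· ≤ ·)

def IsSpecialTree (T : Type u) [PartialOrder T] (κ : Cardinal.{u}) : Prop :=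
  ∃ (β : Type u) (f : T → β), #β ≤ κ ∧ ∀ ⦃s t : T⦄, s < t → f s ≠ f t

def HasChainOfSize (T : Type u) [PartialOrder T] (κ : Cardinal.{u}) : Prop :=
  ∃ C : Set T, IsChain (· ≤ ·) C ∧ #C = κ

def HasAntichainOfSize (T : Type u) [PartialOrder T] (κ : Cardinal.{u}) : Prop :=
  ∃ A : Set T, IsAntichain (· ≤ ·) A ∧ #A = κ

def HasIndepOfSize {V : Type u} (G : SimpleGraph V) (κ : Cardinal.{u}) : Prop :=
  ∃ S : Set V, #S = κ ∧ ∀ x ∈ S, ∀ y ∈ S, ¬ G.Adj x y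

def AllChainsCountable (T : Type u) [PartialOrder T] : Prop :=
  ∀ C : Set T, IsChain (· ≤ ·) C → #C ≤ ℵ₀

noncomputable def nodeHeight {T : Type u} [PartialOrder T] (hT : IsSetTree T) (t : T) : Ordinal.{u} :=
  @Ordinal.type {s : T // s < t} (· < ·) (hT t)

def KappaLambdaConnected {V : Type u} (G : SimpleGraph V) (κ μ : Cardinal.{u}) : Prop :=
  ∀ S : Set V, #S < κ → (Sᶜ : Set V).Nonempty ∧ #((G.induce (Sᶜ : Set V)).ConnectedComponent) < μ

def KappaConnected {V : Type u} (G : SimpleGraph V) (κ : Cardinal.{u}) : Prop :=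
  κ ≤ #V ∧ ∀ S : Set V, #S < κ → (G.induce (Sᶜ : Set V)).Connected

def ContainsSubdivisionOfComplete {V : Type u} (G : SimpleGraph V) (κ : Cardinal.{u}) : Prop :=
  ∃ (ι : Type u) (v : ι → V), #ι = κ ∧ Function.Injective v ∧
    ∃ p : ∀ i j : ι, G.Walk (v i) (v j),
      (∀ i j, i ≠ j → (p i j).IsPath) ∧
      (∀ i j k l, i ≠ j → k ≠ l → (i, j) ≠ (k, l) → (i, j) ≠ (l, k) →
        ∀ x, x ∈ (p i j).support → x ∈ (p k l).support → x ∈ Set.range v) ∧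
      (∀ i j k, i ≠ j → v k ∈ (p i j).support → k = i ∨ k = j)

def IsTGraph {T : Type u} [PartialOrder T] (G : SimpleGraph T) : Prop :=
  (∀ ⦃s t⦄, G.Adj s t → s < t ∨ t < s) ∧
  (∀ t s : T, s < t → ∃ r, s ≤ r ∧ r < t ∧ G.Adj r t)

section kurepaAux
variable {T : Type u} [PartialOrder T]

theorem nh_typein (hT : IsSetTree T) {t : T} (a : {s : T // s < t}) :
    nodeHeight hT a.1 = @Ordinal.typein {s : T // s < t} (· < ·) (hT t) a := by
  have inst := hT t
  have inst2 := hT a.1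
  rw [← Ordinal.type_subrel]
  have f : @RelIso {s : T // s < a.1} {b : {s : T // s < t} // b ∈ {b | b < a}}
      (· < ·) (Subrel (· < ·) {b | b < a}) :=
    { toFun := fun r => ⟨⟨r.1, r.2.trans a.2⟩, Subtype.coe_lt_coe.mp r.2⟩
      invFun := fun b => ⟨b.1.1, b.2⟩
      left_inv := fun r => rfl
      right_inv := fun b => rfl
      map_rel_iff' := by intro x y; rfl }
  haveI : IsWellOrder {b : {s : T // s < t} // b ∈ {b | b < a}} (Subrel (· < ·) {b | b < a}) :=
    (Subrel.relEmbedding _ _).isWellOrder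
  exact f.ordinal_type_eq

theorem nh_lt_of_lt (hT : IsSetTree T) {s t : T} (h : s < t) :
    nodeHeight hT s < nodeHeight hT t := by
  have inst := hT t
  have := nh_typein hT (⟨s, h⟩ : {s : T // s < t})
  rw [this]
  exact Ordinal.typein_lt_type _ _

theorem nh_le_of_le (hT : IsSetTree T) {s t : T} (h : s ≤ t) :
    nodeHeight hT s ≤ nodeHeight hT t := by
  rcases eq_or_lt_of_le h with rfl | h
  · exact le_rfl
  · exact (nh_lt_of_lt hT h).le

theorem comparable_of_le (hT : IsSetTree T) {s₁ s₂ t : T} (h₁ : s₁ ≤ t) (h₂ : s₂ ≤ t) :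
    s₁ ≤ s₂ ∨ s₂ ≤ s₁ := by
  rcases eq_or_lt_of_le h₁ with rfl | h₁
  · right; exact h₂
  rcases eq_or_lt_of_le h₂ with rfl | h₂
  · left; exact h₁.le
  have inst := hT t
  have tri := trichotomous_of (· < ·) (⟨s₁, h₁⟩ : {s : T // s < t}) ⟨s₂, h₂⟩
  rcases tri with h | h | h
  · left; exact (Subtype.mk_lt_mk.mp h).le
  · left; exact le_of_eq (congrArg Subtype.val h)
  · right; exact (Subtype.mk_lt_mk.mp h).le

theorem le_of_le_of_nh_le (hT : IsSetTree T) {x s y : T} (hx : x ≤ y) (hs : s ≤ y)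
    (h : nodeHeight hT x ≤ nodeHeight hT s) : x ≤ s := by
  rcases comparable_of_le hT hx hs with h' | h'
  · exact h'
  · rcases eq_or_lt_of_le h' with rfl | h'
    · exact le_rfl
    · exact absurd (nh_lt_of_lt hT h') (not_lt.mpr h)

theorem nh_inj_of_le (hT : IsSetTree T) {x s y : T} (hx : x ≤ y) (hs : s ≤ y)
    (h : nodeHeight hT x = nodeHeight hT s) : x = s :=
  le_antisymm (le_of_le_of_nh_le hT hx hs h.le) (le_of_le_of_nh_le hT hs hx h.ge)

theorem proj_exists (hT : IsSetTree T) {t : T} {o : Ordinal.{u}} (h : o ≤ nodeHeight hT t) :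
    ∃ s, s ≤ t ∧ nodeHeight hT s = o := by
  rcases eq_or_lt_of_le h with rfl | h
  · exact ⟨t, le_rfl, rfl⟩
  have inst := hT t
  obtain ⟨a, ha⟩ := Ordinal.typein_surj (α := {s : T // s < t}) (· < ·) h
  exact ⟨a.1, a.2.le, (nh_typein hT a).trans ha⟩

/-- `x` has an extension at level `β`. -/
def ExtL (hT : IsSetTree T) (x : T) (β : Ordinal.{u}) : Prop :=
  ∃ y, x ≤ y ∧ nodeHeight hT y = β

/-- `x` has extensions at every level below `κ.ord`. -/
def TallN (hT : IsSetTree T) (κ : Cardinal.{u}) (x : T) : Prop :=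
  ∀ β, nodeHeight hT x ≤ β → β < κ.ord → ExtL hT x β

theorem extL_mono (hT : IsSetTree T) {x : T} {β β' : Ordinal.{u}} (h' : ExtL hT x β')
    (h1 : nodeHeight hT x ≤ β) (h2 : β ≤ β') : ExtL hT x β := by
  obtain ⟨y, hxy, hy⟩ := h'
  obtain ⟨s, hsy, hs⟩ := proj_exists hT (show β ≤ nodeHeight hT y by rw [hy]; exact h2)
  exact ⟨s, le_of_le_of_nh_le hT hxy hsy (by rw [hs]; exact h1), hs⟩

theorem tallN_of_le (hT : IsSetTree T) {κ : Cardinal.{u}}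
    {x z : T} (hxz : x ≤ z) (hz : TallN hT κ z) : TallN hT κ x := by
  intro β h1 h2
  rcases le_or_gt (nodeHeight hT z) β with h | h
  · obtain ⟨y, hzy, hy⟩ := hz β h h2
    exact ⟨y, hxz.trans hzy, hy⟩
  · exact extL_mono hT ⟨z, hxz, rfl⟩ h1 h.le

theorem exists_tall (hT : IsSetTree T) {κ : Cardinal.{u}} (hκ : κ.IsRegular)
    (S : Set T) {β : Ordinal.{u}} (hcard : #S < κ) (hβ : β < κ.ord)
    (hcover : ∀ γ, β ≤ γ → γ < κ.ord → ∃ y ∈ S, ExtL hT y γ) :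
    ∃ y ∈ S, TallN hT κ y := by
  by_contra hcon
  push_neg at hcon
  have hch : ∀ y : S, ∃ γ, nodeHeight hT y.1 ≤ γ ∧ γ < κ.ord ∧ ¬ ExtL hT y.1 γ := by
    intro y
    have := hcon y.1 y.2
    simp only [TallN, not_forall] at this
    obtain ⟨γ, h1, h2, h3⟩ := this
    exact ⟨γ, h1, h2, h3⟩
  choose g hg1 hg2 hg3 using hch
  have hΓ : (⨆ y : S, g y) < κ.ord := by
    apply Ordinal.iSup_lt_ord _ hg2
    rw [hκ.cof_eq]
    exact hcard
  set Γ := max β (⨆ y : S, g y) with hΓdef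
  have hΓO : Γ < κ.ord := max_lt hβ hΓ
  have hsO : Order.succ Γ < κ.ord := (Cardinal.isSuccLimit_ord hκ.aleph0_le).succ_lt hΓO
  obtain ⟨y, hyS, hyE⟩ := hcover (Order.succ Γ) ((le_max_left _ _).trans (Order.le_succ _)) hsO
  refine hg3 ⟨y, hyS⟩ (extL_mono hT hyE (hg1 ⟨y, hyS⟩) ?_)
  calc g ⟨y, hyS⟩ ≤ ⨆ y : S, g y := le_ciSup (Ordinal.bddAbove_range _) _
    _ ≤ Γ := le_max_right _ _
    _ ≤ Order.succ Γ := Order.le_succ _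

end kurepaAux
section kurepaAux2
variable {T : Type u} [PartialOrder T]

theorem tall_base (hT : IsSetTree T) {κ lam : Cardinal.{u}} (hκ : κ.IsRegular)
    (hlt : lam < κ)
    (hlev : ∀ o : Ordinal.{u}, o < κ.ord → ∃ t : T, nodeHeight hT t = o)
    (hwidth : ∀ o : Ordinal.{u}, #{t : T | nodeHeight hT t = o} < lam)
    {β : Ordinal.{u}} (hβ : β < κ.ord) :
    ∃ y, nodeHeight hT y = β ∧ TallN hT κ y := by
  have hcover : ∀ γ, β ≤ γ → γ < κ.ord → ∃ y ∈ {t : T | nodeHeight hT t = β}, ExtL hT y γ := by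
    intro γ hβγ hγ
    obtain ⟨t, ht⟩ := hlev γ hγ
    obtain ⟨s, hst, hs⟩ := proj_exists hT (show β ≤ nodeHeight hT t by rw [ht]; exact hβγ)
    exact ⟨s, hs, t, hst, ht⟩
  obtain ⟨y, hyS, hy⟩ := exists_tall hT hκ {t : T | nodeHeight hT t = β}
    ((hwidth β).trans hlt) hβ hcover
  exact ⟨y, hyS, hy⟩

theorem tall_ext (hT : IsSetTree T) {κ lam : Cardinal.{u}} (hκ : κ.IsRegular)
    (hlt : lam < κ)
    (hwidth : ∀ o : Ordinal.{u}, #{t : T | nodeHeight hT t = o} < lam)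
    {x : T} (hx : TallN hT κ x) {β : Ordinal.{u}} (h1 : nodeHeight hT x ≤ β)
    (hβ : β < κ.ord) :
    ∃ y, x ≤ y ∧ nodeHeight hT y = β ∧ TallN hT κ y := by
  have hcard : #{t : T | x ≤ t ∧ nodeHeight hT t = β} < κ := by
    refine lt_of_le_of_lt ?_ ((hwidth β).trans hlt)
    apply Cardinal.mk_le_mk_of_subset
    intro t ht
    exact ht.2
  have hcover : ∀ γ, β ≤ γ → γ < κ.ord →
      ∃ y ∈ {t : T | x ≤ t ∧ nodeHeight hT t = β}, ExtL hT y γ := by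
    intro γ hβγ hγ
    obtain ⟨z, hxz, hz⟩ := hx γ (h1.trans hβγ) hγ
    obtain ⟨s, hsz, hs⟩ := proj_exists hT (show β ≤ nodeHeight hT z by rw [hz]; exact hβγ)
    have hxs : x ≤ s := le_of_le_of_nh_le hT hxz hsz (by rw [hs]; exact h1)
    exact ⟨s, ⟨hxs, hs⟩, z, hsz, hz⟩
  obtain ⟨y, hyS, hy⟩ := exists_tall hT hκ {t : T | x ≤ t ∧ nodeHeight hT t = β} hcard hβ hcover
  exact ⟨y, hyS.1, hyS.2, hy⟩

end kurepaAux2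

noncomputable def gamRec (next : Ordinal.{u} → Ordinal.{u}) : Ordinal.{u} → Ordinal.{u}
  | ξ => Ordinal.bsup.{u,u} ξ (fun η (_ : η < ξ) => next (gamRec next η))
  termination_by ξ => ξ
  decreasing_by assumption

theorem gamRec_def (next : Ordinal.{u} → Ordinal.{u}) (ξ : Ordinal.{u}) :
    gamRec next ξ = Ordinal.bsup.{u,u} ξ (fun η _ => next (gamRec next η)) := by
  rw [gamRec]

theorem gam_next_le (next : Ordinal.{u} → Ordinal.{u}) {η ξ : Ordinal.{u}} (h : η < ξ) :
    next (gamRec next η) ≤ gamRec next ξ := by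
  conv_rhs => rw [gamRec_def]
  exact Ordinal.le_bsup _ η h

theorem gam_lt (next : Ordinal.{u} → Ordinal.{u}) {lam κ : Cardinal.{u}} (hκ : κ.IsRegular)
    (hlt : lam < κ) (hnext : ∀ β < κ.ord, next β < κ.ord) :
    ∀ ξ, ξ ≤ lam.ord → gamRec next ξ < κ.ord := by
  intro ξ
  induction ξ using Ordinal.induction with
  | h ξ IH =>
    intro hξ
    rw [gamRec_def]
    apply Ordinal.bsup_lt_ord
    · rw [hκ.cof_eq]
      exact lt_of_le_of_lt (by simpa using Ordinal.card_le_card hξ) hlt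
    · intro η hη
      exact hnext _ (IH η hη ((hη.le).trans hξ))
/-- Kurepa: if λ < κ are regular, every tree of height κ all of whose
levels have size < λ has a chain of size κ. -/
theorem stmt13 (κ lam : Cardinal.{u}) (hκ : κ.IsRegular) (hlam : lam.IsRegular)
    (hlt : lam < κ)
    (T : Type u) [PartialOrder T] (hT : IsSetTree T)
    (hht : ∀ t : T, nodeHeight hT t < κ.ord)
    (hlev : ∀ o : Ordinal.{u}, o < κ.ord → ∃ t : T, nodeHeight hT t = o)
    (hwidth : ∀ o : Ordinal.{u}, #{t : T | nodeHeight hT t = o} < lam) :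
    HasChainOfSize T κ := by
  by_contra hnc
  have hO : ℵ₀ ≤ κ := hκ.aleph0_le
  haveI instκ : IsWellOrder κ.ord.ToType ((· < ·) : κ.ord.ToType → κ.ord.ToType → Prop) :=
    isWellOrder_lt
  haveI instlam : IsWellOrder lam.ord.ToType
      ((· < ·) : lam.ord.ToType → lam.ord.ToType → Prop) := isWellOrder_lt
  -- Step 1: every tall node has two incomparable tall extensions
  have split : ∀ x, TallN hT κ x → ∃ u v : T,
      (x ≤ u ∧ TallN hT κ u) ∧ (x ≤ v ∧ TallN hT κ v) ∧ ¬ u ≤ v ∧ ¬ v ≤ u := by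
    intro x hx
    by_contra hcon
    push_neg at hcon
    set C : Set T := {y | x ≤ y ∧ TallN hT κ y} with hC
    have hcomp : ∀ a ∈ C, ∀ b ∈ C, a ≤ b ∨ b ≤ a := by
      intro a ha b hb
      by_cases h : a ≤ b
      · exact Or.inl h
      · exact Or.inr (hcon a b ha hb h)
    have hchain : IsChain (· ≤ ·) C := fun a ha b hb _ => hcomp a ha b hb
    have hle : #C ≤ κ := by
      have inj : Function.Injective (fun y : C =>
          Ordinal.enum ((· < ·) : κ.ord.ToType → κ.ord.ToType → Prop)
            ⟨nodeHeight hT y.1, by rw [Ordinal.type_toType]; exact hht y.1⟩) := by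
        intro a b hab
        have h2 : nodeHeight hT a.1 = nodeHeight hT b.1 :=
          congrArg Subtype.val ((Ordinal.enum _).injective hab)
        apply Subtype.ext
        rcases hcomp a.1 a.2 b.1 b.2 with h | h
        · exact nh_inj_of_le hT h le_rfl h2
        · exact (nh_inj_of_le hT h le_rfl h2.symm).symm
      calc #C ≤ #κ.ord.ToType := Cardinal.mk_le_of_injective inj
        _ = κ := by rw [Cardinal.mk_toType, Cardinal.card_ord]
    have hge : κ ≤ #C := by
      have hexists : ∀ b : κ.ord.ToType, ∃ y : T, (x ≤ y ∧ TallN hT κ y) ∧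
          nodeHeight hT y = nodeHeight hT x + Ordinal.typein (α := κ.ord.ToType) (· < ·) b := by
        intro b
        have htyb : Ordinal.typein (α := κ.ord.ToType) (· < ·) b < κ.ord := by
          conv_rhs => rw [← Ordinal.type_toType κ.ord]
          exact Ordinal.typein_lt_type _ b
        have hadd : nodeHeight hT x + Ordinal.typein (α := κ.ord.ToType) (· < ·) b < κ.ord :=
          Ordinal.isPrincipal_add_ord hO (hht x) htyb
        obtain ⟨y, h1, h2, h3⟩ := tall_ext hT hκ hlt hwidth hx
          (le_self_add) hadd
        exact ⟨y, ⟨h1, h3⟩, h2⟩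
      choose g hg1 hg2 using hexists
      have hginj : Function.Injective g := by
        intro a b hab
        have h3 : nodeHeight hT (g a) = nodeHeight hT (g b) := by rw [hab]
        rw [hg2, hg2] at h3
        exact Ordinal.typein_injective _ ((add_right_inj _).mp h3)
      have hκeq : κ = #κ.ord.ToType := by rw [Cardinal.mk_toType, Cardinal.card_ord]
      rw [hκeq]
      refine Cardinal.mk_le_of_injective (f := fun b => (⟨g b, hg1 b⟩ : C)) ?_
      intro a b h
      apply hginj
      exact congrArg Subtype.val h
    exact hnc ⟨C, hchain, le_antisymm hle hge⟩
  choose us vs hA hB hCC hD using split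
  -- the "next" function bounding splitting levels
  set bound : Ordinal.{u} → Ordinal.{u} := fun β =>
    ⨆ p : {y : T // TallN hT κ y ∧ nodeHeight hT y = β},
      Order.succ (max (nodeHeight hT (us p.1 p.2.1)) (nodeHeight hT (vs p.1 p.2.1)))
    with hbound
  set next : Ordinal.{u} → Ordinal.{u} := fun β => max (Order.succ β) (bound β) with hnext
  have hnextO : ∀ β < κ.ord, next β < κ.ord := by
    intro β hβ
    apply max_lt ((Cardinal.isSuccLimit_ord hO).succ_lt hβ)
    apply Ordinal.iSup_lt_ord _
      (fun p => (Cardinal.isSuccLimit_ord hO).succ_lt (max_lt (hht _) (hht _)))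
    rw [hκ.cof_eq]
    refine lt_of_le_of_lt ?_ ((hwidth β).trans hlt)
    refine Cardinal.mk_le_of_injective
      (f := fun p : {y : T // TallN hT κ y ∧ nodeHeight hT y = β} =>
        (⟨p.1, p.2.2⟩ : {t : T | nodeHeight hT t = β})) ?_
    intro a b h
    simp only [Subtype.mk.injEq] at h
    exact Subtype.ext h
  have hβnext : ∀ β : Ordinal.{u}, β < next β :=
    fun β => lt_of_lt_of_le (Order.lt_succ β) (le_max_left _ _)
  have hbound_le : ∀ (y : T) (hy : TallN hT κ y),
      nodeHeight hT (us y hy) < next (nodeHeight hT y) ∧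
      nodeHeight hT (vs y hy) < next (nodeHeight hT y) := by
    intro y hy
    have hmem : Order.succ (max (nodeHeight hT (us y hy)) (nodeHeight hT (vs y hy))) ≤
        bound (nodeHeight hT y) :=
      le_ciSup (Ordinal.bddAbove_range _)
        (⟨y, hy, rfl⟩ : {y' : T // TallN hT κ y' ∧ nodeHeight hT y' = nodeHeight hT y})
    have hb : bound (nodeHeight hT y) ≤ next (nodeHeight hT y) := le_max_right _ _
    constructor
    · exact lt_of_lt_of_le (Order.lt_succ_of_le (le_max_left _ _)) (hmem.trans hb)
    · exact lt_of_lt_of_le (Order.lt_succ_of_le (le_max_right _ _)) (hmem.trans hb)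
  -- the tower of levels
  set Γ : Ordinal.{u} := gamRec next lam.ord with hΓ
  have hΓO : Γ < κ.ord := gam_lt next hκ hlt hnextO lam.ord le_rfl
  obtain ⟨z, hzΓ, hz⟩ := tall_base hT hκ hlt hlev hwidth hΓO
  have key : ∀ ξ : Ordinal.{u}, ξ < lam.ord → ∃ p e w : T,
      p ≤ z ∧ nodeHeight hT p = gamRec next ξ ∧ p ≤ e ∧ ¬ e ≤ z ∧
      nodeHeight hT e < next (gamRec next ξ) ∧ e ≤ w ∧ nodeHeight hT w = Γ := by
    intro ξ hξ
    have hγO : gamRec next ξ < κ.ord := gam_lt next hκ hlt hnextO ξ hξ.le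
    have hnΓ : next (gamRec next ξ) ≤ Γ := gam_next_le next hξ
    have hγΓ : gamRec next ξ ≤ Γ := (hβnext _).le.trans hnΓ
    obtain ⟨p, hpz, hp⟩ := proj_exists hT
      (show gamRec next ξ ≤ nodeHeight hT z by rw [hzΓ]; exact hγΓ)
    have hptall : TallN hT κ p := tallN_of_le hT hpz hz
    obtain ⟨hbu, hbv⟩ := hbound_le p hptall
    rw [hp] at hbu hbv
    by_cases huz : us p hptall ≤ z
    · have hvz : ¬ vs p hptall ≤ z := by
        intro hvz
        rcases comparable_of_le hT huz hvz with h | h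
        · exact hCC p hptall h
        · exact hD p hptall h
      have hetall : TallN hT κ (vs p hptall) := (hB p hptall).2
      obtain ⟨w, hew, hwΓ, -⟩ := tall_ext hT hκ hlt hwidth hetall
        (show nodeHeight hT (vs p hptall) ≤ Γ from (lt_of_lt_of_le hbv hnΓ).le) hΓO
      exact ⟨p, vs p hptall, w, hpz, hp, (hB p hptall).1, hvz, hbv, hew, hwΓ⟩
    · have hetall : TallN hT κ (us p hptall) := (hA p hptall).2
      obtain ⟨w, hew, hwΓ, -⟩ := tall_ext hT hκ hlt hwidth hetall
        (show nodeHeight hT (us p hptall) ≤ Γ from (lt_of_lt_of_le hbu hnΓ).le) hΓO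
      exact ⟨p, us p hptall, w, hpz, hp, (hA p hptall).1, huz, hbu, hew, hwΓ⟩
  choose P E Wf hPz hPnh hPE hEz hEnh hEW hWΓ using key
  have main : ∀ (ξ η : Ordinal.{u}) (hξ : ξ < lam.ord) (hη : η < lam.ord),
      ξ < η → Wf ξ hξ ≠ Wf η hη := by
    intro ξ η hξ hη hlt' heq
    have h1 : E ξ hξ ≤ Wf η hη := heq ▸ hEW ξ hξ
    have h2 : P η hη ≤ Wf η hη := (hPE η hη).trans (hEW η hη)
    have hnh : nodeHeight hT (E ξ hξ) ≤ nodeHeight hT (P η hη) := by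
      rw [hPnh η hη]
      exact le_trans (hEnh ξ hξ).le (gam_next_le next hlt')
    have h3 : E ξ hξ ≤ P η hη := le_of_le_of_nh_le hT h1 h2 hnh
    exact hEz ξ hξ (h3.trans (hPz η hη))
  have hty : ∀ b : lam.ord.ToType, Ordinal.typein (α := lam.ord.ToType) (· < ·) b < lam.ord := by
    intro b
    have := Ordinal.typein_lt_self b
    exact this
  have hinj : Function.Injective (fun b : lam.ord.ToType =>
      (⟨Wf (Ordinal.typein (α := lam.ord.ToType) (· < ·) b) (hty b), hWΓ _ _⟩ :
        {t : T | nodeHeight hT t = Γ})) := by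
    intro a b hab
    have heq : Wf (Ordinal.typein (α := lam.ord.ToType) (· < ·) a) (hty a) =
        Wf (Ordinal.typein (α := lam.ord.ToType) (· < ·) b) (hty b) :=
      congrArg Subtype.val hab
    by_contra hne
    rcases lt_trichotomy (Ordinal.typein (α := lam.ord.ToType) (· < ·) a)
      (Ordinal.typein (α := lam.ord.ToType) (· < ·) b) with h | h | h
    · exact main _ _ (hty a) (hty b) h heq
    · exact hne (Ordinal.typein_injective _ h)
    · exact main _ _ (hty b) (hty a) h heq.symm
  have hlam_le : lam ≤ #{t : T | nodeHeight hT t = Γ} := by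
    calc lam = #lam.ord.ToType := by rw [Cardinal.mk_toType, Cardinal.card_ord]
      _ ≤ _ := Cardinal.mk_le_of_injective hinj
  exact absurd hlam_le (not_le.mpr (hwidth Γ))
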